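/- Let f be convex, C², semi-strongly self-concordant with constant L_semi, with positive definite Hessians, and let L ≥ L_semi. Define S(x) = argmin_y { f(x) + ⟨∇f(x), y−x⟩ + (1/2)⟨∇²f(x)(y−x), y−x⟩ + (L/6)‖y−x‖_x³ }. Then for every x: f(S(x)) ≤ min_y { f(y) + (L/3)‖y−x‖_x³ }. -/

import Mathlib

open RealInnerProductSpace intervalIntegral

set_option maxHeartbeats 1000000 in

theorem one_step_global_decrease {d : ℕ}
    (f : EuclideanSpace ℝ (Fin d) → ℝ)
    (hess : EuclideanSpace ℝ (Fin d) → EuclideanSpace ℝ (Fin d) →L[ℝ] EuclideanSpace ℝ (Fin d))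
    (Lsemi L : ℝ) (hLsemi : 0 ≤ Lsemi) (hLL : Lsemi ≤ L)
    (hconv : ConvexOn ℝ Set.univ f)
    (hf : ContDiff ℝ 2 f)
    (hhess : ∀ x, HasFDerivAt (gradient f) (hess x) x)
    (hpd : ∀ x v, v ≠ 0 → 0 < ⟪hess x v, v⟫)
    -- semi-strong self-concordance (operator-norm form, as a bilinear bound)
    (hssc : ∀ x y u v, |⟪(hess y - hess x) u, v⟫| ≤
      Lsemi * Real.sqrt ⟪hess x (y - x), y - x⟫ *
        (Real.sqrt ⟪hess x u, u⟫ * Real.sqrt ⟪hess x v, v⟫))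
    -- the cubically regularized model at x
    (Q : EuclideanSpace ℝ (Fin d) → EuclideanSpace ℝ (Fin d) → ℝ)
    (hQ : ∀ x y, Q x y = f x + ⟪gradient f x, y - x⟫ + 1 / 2 * ⟪hess x (y - x), y - x⟫ +
      L / 6 * Real.sqrt ⟪hess x (y - x), y - x⟫ ^ 3) :
    ∀ x s, (∀ y, Q x s ≤ Q x y) →
      ∀ y, f s ≤ f y + L / 3 * Real.sqrt ⟪hess x (y - x), y - x⟫ ^ 3 := by
  -- Key two-sided Taylor bound from semi-strong self-concordance:
  have key : ∀ x y : EuclideanSpace ℝ (Fin d),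
      |f y - (f x + ⟪gradient f x, y - x⟫ + 1 / 2 * ⟪hess x (y - x), y - x⟫)| ≤
        Lsemi / 6 * Real.sqrt ⟪hess x (y - x), y - x⟫ ^ 3 := by
    intro x y
    set h : EuclideanSpace ℝ (Fin d) := y - x with hh
    set c : ℝ → EuclideanSpace ℝ (Fin d) := fun t => x + t • h with hcdef
    have hc : ∀ t : ℝ, HasDerivAt c h t := by
      intro t
      simpa [hcdef] using ((hasDerivAt_id t).smul_const h).const_add x
    have hc0 : c 0 = x := by simp [hcdef]
    have hc1 : c 1 = y := by simp [hcdef, hh]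
    set p : ℝ → ℝ := fun t => ⟪gradient f (c t), h⟫ with hpdef
    set ψ : ℝ → ℝ := fun t => ⟪hess (c t) h, h⟫ with hψdef
    set M : ℝ := Real.sqrt ⟪hess x h, h⟫ with hM
    have hdf : ∀ t : ℝ, HasDerivAt (fun t => f (c t)) (p t) t := by
      intro t
      have hg : HasGradientAt f (gradient f (c t)) (c t) :=
        (hf.differentiable (by norm_num) (c t)).hasGradientAt
      have := hg.hasFDerivAt.comp_hasDerivAt t (hc t)
      simpa [hpdef, InnerProductSpace.toDual_apply_apply, Function.comp_def] using this
    have hdp : ∀ t : ℝ, HasDerivAt p (ψ t) t := by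
      intro t
      have hgc : HasDerivAt (fun t => gradient f (c t)) (hess (c t) h) t :=
        (hhess (c t)).comp_hasDerivAt t (hc t)
      have := HasDerivAt.inner ℝ hgc (hasDerivAt_const t h)
      simpa [hpdef, hψdef] using this
    -- continuity of ψ via the self-concordance Lipschitz-type bound
    have hψcont : Continuous ψ := by
      rw [continuous_iff_continuousAt]
      intro s
      set K : ℝ := Lsemi * Real.sqrt ⟪hess (c s) h, h⟫ *
        (Real.sqrt ⟪hess (c s) h, h⟫ * Real.sqrt ⟪hess (c s) h, h⟫) with hK
      have hb : ∀ t : ℝ, |ψ t - ψ s| ≤ K * |t - s| := by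
        intro t
        have h1 := hssc (c s) (c t) h h
        have h2 : c t - c s = (t - s) • h := by
          simp [hcdef, sub_smul]
        have h3 : ⟪hess (c s) ((t - s) • h), (t - s) • h⟫ =
            (t - s) ^ 2 * ⟪hess (c s) h, h⟫ := by
          rw [map_smul, real_inner_smul_left, real_inner_smul_right]
          ring
        rw [h2, h3] at h1
        have h4 : Real.sqrt ((t - s) ^ 2 * ⟪hess (c s) h, h⟫) =
            |t - s| * Real.sqrt ⟪hess (c s) h, h⟫ := by
          rw [Real.sqrt_mul (sq_nonneg _), Real.sqrt_sq_eq_abs]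
        rw [h4] at h1
        have h5 : ψ t - ψ s = ⟪(hess (c t) - hess (c s)) h, h⟫ := by
          simp [hψdef, ContinuousLinearMap.sub_apply, inner_sub_left]
        rw [h5]
        calc |⟪(hess (c t) - hess (c s)) h, h⟫| ≤
            Lsemi * (|t - s| * Real.sqrt ⟪hess (c s) h, h⟫) *
              (Real.sqrt ⟪hess (c s) h, h⟫ * Real.sqrt ⟪hess (c s) h, h⟫) := h1
          _ = K * |t - s| := by rw [hK]; ring
      have h0 : Filter.Tendsto (fun t => K * |t - s|) (nhds s) (nhds 0) := by
        have hcont : Continuous fun t : ℝ => K * |t - s| :=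
          continuous_const.mul ((continuous_id.sub continuous_const).abs)
        have := hcont.tendsto s
        simpa using this
      have hsq : Filter.Tendsto (fun t => |ψ t - ψ s|) (nhds s) (nhds 0) :=
        squeeze_zero (fun t => abs_nonneg _) hb h0
      rw [ContinuousAt, tendsto_iff_dist_tendsto_zero]
      simpa [Real.dist_eq] using hsq
    -- integral representation
    have hdχ : ∀ t : ℝ, HasDerivAt (fun t => f (c t) + (1 - t) * p t) ((1 - t) * ψ t) t := by
      intro t
      have h1 := (hdf t).add
        (((hasDerivAt_const t (1 : ℝ)).sub (hasDerivAt_id t)).mul (hdp t))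
      have h2 : p t + ((0 - 1) * p t + (1 - t) * ψ t) = (1 - t) * ψ t := by ring
      rw [← h2]
      exact h1
    have hInt : IntervalIntegrable (fun t => (1 - t) * ψ t) MeasureTheory.volume 0 1 :=
      ((continuous_const.sub continuous_id).mul hψcont).intervalIntegrable 0 1
    have hid : ∫ t in (0 : ℝ)..1, (1 - t) * ψ t =
        (f (c 1) + (1 - 1) * p 1) - (f (c 0) + (1 - 0) * p 0) :=
      intervalIntegral.integral_eq_sub_of_hasDerivAt (fun t _ => hdχ t) hInt
    have hp0 : p 0 = ⟪gradient f x, h⟫ := by rw [hpdef]; simp [hc0]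
    have hψ0 : ψ 0 = ⟪hess x h, h⟫ := by rw [hψdef]; simp [hc0]
    have hhalf : ∫ t in (0 : ℝ)..1, (1 - t) * ψ 0 = 1 / 2 * ψ 0 := by
      rw [intervalIntegral.integral_mul_const]
      have : ∫ t in (0 : ℝ)..1, (1 - t) = 1 / 2 := by
        rw [intervalIntegral.integral_sub (intervalIntegrable_const)
          intervalIntegrable_id]
        simp [integral_id]
        norm_num
      rw [this]
    have hIntc : IntervalIntegrable (fun t => (1 - t) * ψ 0) MeasureTheory.volume 0 1 :=
      ((continuous_const.sub continuous_id).mul continuous_const).intervalIntegrable 0 1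
    have hrepr : f y - (f x + ⟪gradient f x, h⟫ + 1 / 2 * ⟪hess x h, h⟫) =
        ∫ t in (0 : ℝ)..1, (1 - t) * (ψ t - ψ 0) := by
      have hsplit : ∫ t in (0 : ℝ)..1, (1 - t) * (ψ t - ψ 0) =
          (∫ t in (0 : ℝ)..1, (1 - t) * ψ t) - ∫ t in (0 : ℝ)..1, (1 - t) * ψ 0 := by
        rw [← intervalIntegral.integral_sub hInt hIntc]
        exact intervalIntegral.integral_congr (fun t _ => by ring)
      rw [hsplit, hid, hhalf, hc1, hc0, hp0, hψ0]
      ring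
    -- the pointwise bound on the integrand
    have hbd : ∀ t ∈ Set.Icc (0 : ℝ) 1,
        |(1 - t) * (ψ t - ψ 0)| ≤ (1 - t) * (Lsemi * t * M ^ 3) := by
      intro t ht
      have h1 := hssc x (c t) h h
      have h2 : c t - x = t • h := by simp [hcdef]
      rw [h2] at h1
      have h3 : ⟪hess x (t • h), t • h⟫ = t ^ 2 * ⟪hess x h, h⟫ := by
        rw [map_smul, real_inner_smul_left, real_inner_smul_right]
        ring
      rw [h3, Real.sqrt_mul (sq_nonneg t), Real.sqrt_sq ht.1] at h1
      have h5 : ψ t - ψ 0 = ⟪(hess (c t) - hess x) h, h⟫ := by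
        simp [hψdef, hc0, ContinuousLinearMap.sub_apply, inner_sub_left]
      rw [abs_mul, h5, abs_of_nonneg (by linarith [ht.2] : (0:ℝ) ≤ 1 - t)]
      apply mul_le_mul_of_nonneg_left _ (by linarith [ht.2])
      calc |⟪(hess (c t) - hess x) h, h⟫| ≤
          Lsemi * (t * Real.sqrt ⟪hess x h, h⟫) *
            (Real.sqrt ⟪hess x h, h⟫ * Real.sqrt ⟪hess x h, h⟫) := h1
        _ = Lsemi * t * M ^ 3 := by rw [hM]; ring
    have hIntAbs : IntervalIntegrable (fun t => |(1 - t) * (ψ t - ψ 0)|)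
        MeasureTheory.volume 0 1 :=
      (((continuous_const.sub continuous_id).mul (hψcont.sub continuous_const)).abs).intervalIntegrable 0 1
    have hIntBnd : IntervalIntegrable (fun t => (1 - t) * (Lsemi * t * M ^ 3))
        MeasureTheory.volume 0 1 :=
      ((continuous_const.sub continuous_id).mul
        ((continuous_const.mul continuous_id).mul continuous_const)).intervalIntegrable 0 1
    have habs : |∫ t in (0 : ℝ)..1, (1 - t) * (ψ t - ψ 0)| ≤
        ∫ t in (0 : ℝ)..1, (1 - t) * (Lsemi * t * M ^ 3) := by
      calc |∫ t in (0 : ℝ)..1, (1 - t) * (ψ t - ψ 0)| ≤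
          ∫ t in (0 : ℝ)..1, |(1 - t) * (ψ t - ψ 0)| :=
            intervalIntegral.abs_integral_le_integral_abs zero_le_one
        _ ≤ ∫ t in (0 : ℝ)..1, (1 - t) * (Lsemi * t * M ^ 3) :=
            intervalIntegral.integral_mono_on zero_le_one hIntAbs hIntBnd hbd
    have hval : ∫ t in (0 : ℝ)..1, (1 - t) * (Lsemi * t * M ^ 3) = Lsemi / 6 * M ^ 3 := by
      rw [intervalIntegral.integral_congr
        (g := fun t => (Lsemi * M ^ 3) * (t - t ^ 2)) (fun t _ => by ring)]
      rw [intervalIntegral.integral_const_mul,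
        intervalIntegral.integral_sub intervalIntegrable_id
          ((continuous_pow 2).intervalIntegrable 0 1),
        integral_id, integral_pow]
      norm_num
      ring
    rw [hrepr]
    calc |∫ t in (0 : ℝ)..1, (1 - t) * (ψ t - ψ 0)| ≤
        ∫ t in (0 : ℝ)..1, (1 - t) * (Lsemi * t * M ^ 3) := habs
      _ = Lsemi / 6 * M ^ 3 := hval
  -- main argument
  intro x s hmin y
  have hks := abs_le.mp (key x s)
  have hky := abs_le.mp (key x y)
  have hmy := hmin y
  rw [hQ x s, hQ x y] at hmy
  have hMs : (0 : ℝ) ≤ Real.sqrt ⟪hess x (s - x), s - x⟫ ^ 3 :=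
    pow_nonneg (Real.sqrt_nonneg _) 3
  have hMy : (0 : ℝ) ≤ Real.sqrt ⟪hess x (y - x), y - x⟫ ^ 3 :=
    pow_nonneg (Real.sqrt_nonneg _) 3
  nlinarith [hks.1, hks.2, hky.1, hky.2, mul_le_mul_of_nonneg_right hLL hMs,
    mul_le_mul_of_nonneg_right hLL hMy]
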